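/- For the embedding H₃ ← H₂ (obtained by deleting the first ω-coordinate of each orbit point), the embedding index equals 3/2 for the orbit of (1,0,0): the sum of squared lengths of the 12 icosahedron vertices (H₃ inner product) equals 3/2 times the sum of squared H₂-lengths of the 12 points obtained by deleting the first coordinate. -/
import Mathlib

open Matrix

set_option maxHeartbeats 1000000 in
theorem H3_H2_embedding_index :
    let τ : ℝ := (1 + Real.sqrt 5) / 2
    let C3 : Matrix (Fin 3) (Fin 3) ℝ := !![2, -1, 0; -1, 2, -τ; 0, -τ, 2]
    let C2 : Matrix (Fin 2) (Fin 2) ℝ := !![2, -τ; -τ, 2]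
    let ip3 : (Fin 3 → ℝ) → (Fin 3 → ℝ) → ℝ := fun u v => u ⬝ᵥ (((2 : ℝ) • C3⁻¹) *ᵥ v)
    let ip2 : (Fin 2 → ℝ) → (Fin 2 → ℝ) → ℝ := fun u v => u ⬝ᵥ (((2 : ℝ) • C2⁻¹) *ᵥ v)
    let L : List (Fin 3 → ℝ) :=
      [![1, 0, 0], -![1, 0, 0], ![-1, 1, 0], -![-1, 1, 0],
       ![0, -1, τ], -![0, -1, τ], ![0, τ, -τ], -![0, τ, -τ],
       ![τ, -τ, 1], -![τ, -τ, 1], ![τ, 0, -1], -![τ, 0, -1]]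
    (L.map (fun μ => ip3 μ μ)).sum =
      (3 / 2) * (L.map (fun μ => ip2 ![μ 1, μ 2] ![μ 1, μ 2])).sum := by
  intro τ C3 C2 ip3 ip2 L
  have hs : Real.sqrt 5 ^ 2 = 5 := Real.sq_sqrt (by norm_num)
  have hτ : τ ^ 2 = τ + 1 := by
    show ((1 + Real.sqrt 5)/2)^2 = (1 + Real.sqrt 5)/2 + 1
    field_simp
    nlinarith [hs]
  have h3 : C3⁻¹ = !![1 + τ/2, 1 + τ, 1/2 + τ;
                      1 + τ, 2 + 2*τ, 1 + 2*τ;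
                      1/2 + τ, 1 + 2*τ, 3/2 + 3*τ/2] := by
    apply inv_eq_right_inv
    show (!![2, -1, 0; -1, 2, -τ; 0, -τ, 2] : Matrix (Fin 3) (Fin 3) ℝ) * _ = 1
    ext i j
    fin_cases i <;> fin_cases j <;>
      simp [Matrix.mul_apply, Fin.sum_univ_succ] <;> nlinarith [hτ]
  have h2 : C2⁻¹ = !![4/5 + 2*τ/5, 1/5 + 3*τ/5; 1/5 + 3*τ/5, 4/5 + 2*τ/5] := by
    apply inv_eq_right_inv
    show (!![2, -τ; -τ, 2] : Matrix (Fin 2) (Fin 2) ℝ) * _ = 1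
    ext i j
    fin_cases i <;> fin_cases j <;>
      simp [Matrix.mul_apply, Fin.sum_univ_succ] <;> nlinarith [hτ]
  show (L.map (fun μ => ip3 μ μ)).sum = (3 / 2) * (L.map (fun μ => ip2 ![μ 1, μ 2] ![μ 1, μ 2])).sum
  simp only [ip3, ip2, h3, h2, L, List.map_cons, List.map_nil, List.sum_cons, List.sum_nil]
  simp [Matrix.mulVec, dotProduct, Fin.sum_univ_succ, Matrix.smul_apply]
  linear_combination ((28*τ - 44)/5) * hτ
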